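/- Let α be an irrational real number whose partial quotients tend to infinity. Then for every ε > 1/4, the set {x ∈ [0,1] : liminf_{q→+∞} q·‖qα − x‖ = ε} is empty; equivalently, Bad^ε_+(α) = {x ∈ [0,1] : liminf_{q→+∞} q·‖qα − x‖ ≥ ε} is empty for ε > 1/4. -/

import Mathlib

open Filter MeasureTheory

/-- Distance from a real number to the nearest integer. -/
noncomputable def nint (x : ℝ) : ℝ := |x - round x|

/-- The `(k+1)`-st partial quotient of the continued fraction of `α`. -/
noncomputable def partialQuotient (α : ℝ) (k : ℕ) : ℝ :=
  (((GenContFract.of α).partDens.get? k).getD 0)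

/-- The partial quotients of `α` tend to infinity. -/
def PartialQuotientsTendToInfinity (α : ℝ) : Prop :=
  Tendsto (fun k : ℕ => partialQuotient α k) atTop atTop

/-- The one-sided set `Bad^ε_+(α)`, with `q` ranging over positive integers. -/
noncomputable def badSetPlus (α ε : ℝ) : Set ℝ :=
  {x ∈ Set.Icc (0 : ℝ) 1 |
    ε ≤ Filter.liminf (fun q : ℕ => (q : ℝ) * nint (q * α - x)) Filter.atTop}

namespace CFAux

/-- The Gauss map orbit of `α` (fractional parts). -/
noncomputable def t (α : ℝ) : ℕ → ℝ
  | 0 => Int.fract α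
  | n + 1 => Int.fract (t α n)⁻¹

/-- The partial quotients, as naturals. -/
noncomputable def A (α : ℝ) (n : ℕ) : ℕ := ⌊(t α n)⁻¹⌋₊

/-- `E α n = η_{n-1}`, the product of the first `n` Gauss iterates. -/
noncomputable def E (α : ℝ) : ℕ → ℝ
  | 0 => 1
  | n + 1 => E α n * t α n

/-- Continued fraction denominators, shifted: `Q (n+1)` is the `n`-th denominator. -/
noncomputable def Q (α : ℝ) : ℕ → ℕ
  | 0 => 0
  | 1 => 1
  | n + 2 => A α n * Q α (n + 1) + Q α n

/-- Continued fraction numerators, shifted. -/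
noncomputable def P (α : ℝ) : ℕ → ℤ
  | 0 => 1
  | 1 => ⌊α⌋
  | n + 2 => A α n * P α (n + 1) + P α n

variable {α : ℝ}

lemma t_irr (hα : Irrational α) : ∀ n, Irrational (t α n)
  | 0 => (hα.sub_intCast ⌊α⌋ : Irrational (α - (⌊α⌋ : ℤ)))
  | n + 1 =>
      (((t_irr hα n).inv).sub_intCast ⌊(t α n)⁻¹⌋ :
        Irrational ((t α n)⁻¹ - (⌊(t α n)⁻¹⌋ : ℤ)))

lemma t_lt_one (n : ℕ) : t α n < 1 := by
  cases n <;> exact Int.fract_lt_one _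

lemma t_nonneg (n : ℕ) : 0 ≤ t α n := by
  cases n <;> exact Int.fract_nonneg _

lemma t_pos (hα : Irrational α) (n : ℕ) : 0 < t α n :=
  lt_of_le_of_ne (t_nonneg n) (Ne.symm (t_irr hα n).ne_zero)

lemma one_lt_tinv (hα : Irrational α) (n : ℕ) : 1 < (t α n)⁻¹ :=
  (one_lt_inv₀ (t_pos hα n)).mpr (t_lt_one n)

lemma key (hα : Irrational α) (n : ℕ) : (A α n : ℝ) + t α (n + 1) = (t α n)⁻¹ := by
  have h0 : (0 : ℝ) ≤ (t α n)⁻¹ := inv_nonneg.mpr (t_nonneg n)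
  have hA : ((A α n : ℕ) : ℝ) = ((⌊(t α n)⁻¹⌋ : ℤ) : ℝ) := by
    rw [A]; exact_mod_cast congrArg (Int.cast : ℤ → ℝ) (Int.natCast_floor_eq_floor h0)
  have ht : t α (n + 1) = (t α n)⁻¹ - ((⌊(t α n)⁻¹⌋ : ℤ) : ℝ) := rfl
  rw [hA, ht]; ring

lemma A_pos (hα : Irrational α) (n : ℕ) : 1 ≤ A α n :=
  Nat.le_floor (by exact_mod_cast (one_lt_tinv hα n).le)

lemma t_le_invA (hα : Irrational α) (n : ℕ) : t α n ≤ ((A α n : ℝ))⁻¹ := by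
  have hA : (0 : ℝ) < (A α n : ℝ) := by
    exact_mod_cast Nat.lt_of_lt_of_le Nat.zero_lt_one (A_pos hα n)
  have h1 : (A α n : ℝ) ≤ (t α n)⁻¹ := by
    have := key hα n; have := t_nonneg (α := α) (n + 1); linarith
  have ht := t_pos hα n
  rw [← one_div, le_div_iff₀ hA]
  calc t α n * A α n ≤ t α n * (t α n)⁻¹ := by
        exact mul_le_mul_of_nonneg_left h1 ht.le
    _ = 1 := mul_inv_cancel₀ ht.ne'

lemma E_pos (hα : Irrational α) : ∀ n, 0 < E α n
  | 0 => one_pos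
  | n + 1 => mul_pos (E_pos hα n) (t_pos hα n)

lemma E_nonneg (n : ℕ) : 0 ≤ E α n := by
  induction n with
  | zero => exact zero_le_one
  | succ n ih => exact mul_nonneg ih (t_nonneg n)

lemma E_le_one (n : ℕ) : E α n ≤ 1 := by
  induction n with
  | zero => exact le_refl 1
  | succ n ih =>
      have h2 : t α n < 1 := t_lt_one n
      have h3 : (0 : ℝ) ≤ E α n := E_nonneg n
      calc E α (n + 1) = E α n * t α n := rfl
        _ ≤ 1 * 1 := mul_le_mul ih h2.le (t_nonneg n) zero_le_one
        _ = 1 := by ring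

lemma E_succ (n : ℕ) : E α (n + 1) = E α n * t α n := rfl

lemma E_lt (hα : Irrational α) (n : ℕ) : E α (n + 1) < E α n := by
  have h1 := E_pos hα n
  have h2 := t_lt_one (α := α) n
  calc E α (n + 1) = E α n * t α n := rfl
    _ < E α n * 1 := by
        exact mul_lt_mul_of_pos_left h2 h1
    _ = E α n := mul_one _

lemma E_rec (hα : Irrational α) (n : ℕ) :
    E α n = (A α n : ℝ) * E α (n + 1) + E α (n + 2) := by
  have hk := key hα n
  have ht := (t_pos hα n).ne'
  have h1 : E α (n + 2) = E α (n + 1) * t α (n + 1) := rfl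
  have h2 : E α (n + 1) = E α n * t α n := rfl
  calc E α n = E α n * (t α n * (t α n)⁻¹) := by rw [mul_inv_cancel₀ ht, mul_one]
    _ = E α (n + 1) * (t α n)⁻¹ := by rw [h2]; ring
    _ = E α (n + 1) * ((A α n : ℝ) + t α (n + 1)) := by rw [hk]
    _ = (A α n : ℝ) * E α (n + 1) + E α (n + 2) := by rw [h1]; ring

lemma Q_pos (hα : Irrational α) : ∀ n, 1 ≤ Q α (n + 1)
  | 0 => le_refl 1
  | n + 1 => by
      have h := Q_pos hα n
      have hA := A_pos hα n
      show 1 ≤ A α n * Q α (n + 1) + Q α n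
      calc 1 ≤ A α n * Q α (n + 1) := Nat.one_le_iff_ne_zero.mpr
            (Nat.mul_ne_zero (by omega) (by omega))
        _ ≤ _ := Nat.le_add_right _ _

lemma Q_mono (hα : Irrational α) : ∀ n, Q α n ≤ Q α (n + 1)
  | 0 => by simp [Q]
  | n + 1 => by
      have hA := A_pos hα n
      show Q α (n + 1) ≤ A α n * Q α (n + 1) + Q α n
      calc Q α (n + 1) = 1 * Q α (n + 1) := (one_mul _).symm
        _ ≤ A α n * Q α (n + 1) := Nat.mul_le_mul_right _ hA
        _ ≤ _ := Nat.le_add_right _ _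

lemma Q_two_mul (hα : Irrational α) : ∀ n, n ≤ 2 * Q α n → True := fun _ _ => trivial

lemma le_QQQ (hα : Irrational α) : ∀ n, n ≤ Q α (n + 1) + Q α n
  | 0 => by simp [Q]
  | n + 1 => by
      have ih := le_QQQ hα n
      have hA := A_pos hα n
      have h1 : Q α (n + 1) + Q α n ≤ Q α (n + 2) := by
        show Q α (n + 1) + Q α n ≤ A α n * Q α (n + 1) + Q α n
        have : Q α (n + 1) ≤ A α n * Q α (n + 1) := by
          calc Q α (n + 1) = 1 * Q α (n + 1) := (one_mul _).symm
            _ ≤ _ := Nat.mul_le_mul_right _ hA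
        omega
      have h2 := Q_pos hα n
      have e1 : Q α (n + 1 + 1) = Q α (n + 2) := rfl
      omega

lemma n_le_two_Q (hα : Irrational α) (n : ℕ) : n ≤ 2 * Q α (n + 1) := by
  have h1 := le_QQQ hα n
  have h2 := Q_mono hα n
  omega

lemma PQ (hα : Irrational α) : ∀ n, (Q α (n + 1) : ℝ) * α - (P α (n + 1) : ℝ)
    = (-1 : ℝ) ^ n * E α (n + 1) := by
  have key2 : ∀ n, (A α n : ℝ) * t α n - 1 = -(t α n * t α (n + 1)) := by
    intro n
    have hk := key hα n
    have ht := (t_pos hα n).ne'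
    have : t α n * ((A α n : ℝ) + t α (n + 1)) = 1 := by
      rw [hk, mul_inv_cancel₀ ht]
    nlinarith [this]
  intro n
  induction n using Nat.twoStepInduction with
  | zero =>
      show (Q α 1 : ℝ) * α - (P α 1 : ℝ) = (-1 : ℝ) ^ 0 * E α 1
      have h1 : Q α 1 = 1 := rfl
      have h2 : P α 1 = ⌊α⌋ := rfl
      have h3 : E α 1 = 1 * t α 0 := rfl
      rw [h1, h2, h3]
      push_cast
      have h4 : t α 0 = α - ((⌊α⌋ : ℤ) : ℝ) := rfl
      rw [h4]; push_cast; ring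
  | one =>
      show (Q α 2 : ℝ) * α - (P α 2 : ℝ) = (-1 : ℝ) ^ 1 * E α 2
      have h1 : Q α 2 = A α 0 * 1 + 0 := rfl
      have h2 : P α 2 = (A α 0 : ℤ) * ⌊α⌋ + 1 := rfl
      have h3 : E α 2 = (1 * t α 0) * t α 1 := rfl
      have h4 : t α 0 = α - ((⌊α⌋ : ℤ) : ℝ) := rfl
      have h5 := key2 0
      rw [h1, h2, h3]
      push_cast
      nlinarith [h5, h4]
  | more n ih1 ih2 =>
      have hQ : Q α (n + 3) = A α (n + 1) * Q α (n + 2) + Q α (n + 1) := rfl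
      have hP : P α (n + 3) = (A α (n + 1) : ℤ) * P α (n + 2) + P α (n + 1) := rfl
      have hE := E_rec hα (n + 1)
      rw [hQ, hP]
      push_cast
      have e1 : ((A α (n + 1) : ℝ) * (Q α (n + 2) : ℝ) + (Q α (n + 1) : ℝ)) * α
          - ((A α (n + 1) : ℝ) * (P α (n + 2) : ℝ) + (P α (n + 1) : ℝ))
          = (A α (n + 1) : ℝ) * ((Q α (n + 2) : ℝ) * α - (P α (n + 2) : ℝ))
            + ((Q α (n + 1) : ℝ) * α - (P α (n + 1) : ℝ)) := by ring
      rw [e1, ih2, ih1]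
      have : E α (n + 3) = E α (n + 1) - (A α (n + 1) : ℝ) * E α (n + 2) := by
        linarith [hE]
      rw [this]
      rcases Nat.even_or_odd n with he | ho
      · have h1 : (-1 : ℝ) ^ n = 1 := he.neg_one_pow
        have h2 : (-1 : ℝ) ^ (n + 1) = -1 := by
          rw [pow_succ, h1]; ring
        have h3 : (-1 : ℝ) ^ (n + 2) = 1 := by
          rw [pow_succ, h2]; ring
        rw [h1, h2, h3]; ring
      · have h1 : (-1 : ℝ) ^ n = -1 := ho.neg_one_pow
        have h2 : (-1 : ℝ) ^ (n + 1) = 1 := by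
          rw [pow_succ, h1]; ring
        have h3 : (-1 : ℝ) ^ (n + 2) = -1 := by
          rw [pow_succ, h2]; ring
        rw [h1, h2, h3]; ring

lemma QE (hα : Irrational α) : ∀ n,
    (Q α (n + 1) : ℝ) * E α n + (Q α n : ℝ) * E α (n + 1) = 1
  | 0 => by
      have h1 : Q α 1 = 1 := rfl
      have h2 : Q α 0 = 0 := rfl
      have h3 : E α 0 = 1 := rfl
      rw [h1, h2, h3]; push_cast; ring
  | n + 1 => by
      have ih := QE hα n
      have hQ : Q α (n + 2) = A α n * Q α (n + 1) + Q α n := rfl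
      have hE := E_rec hα n
      rw [hQ]
      push_cast
      nlinarith [ih, hE]

lemma QE_le_one (hα : Irrational α) (n : ℕ) : (Q α (n + 1) : ℝ) * E α n ≤ 1 := by
  have h := QE hα n
  have h2 : (0 : ℝ) ≤ (Q α n : ℝ) * E α (n + 1) :=
    mul_nonneg (Nat.cast_nonneg _) (E_nonneg _)
  linarith

lemma rho_le (hα : Irrational α) (n : ℕ) :
    (Q α (n + 1) : ℝ) * E α (n + 1) ≤ t α n := by
  have h1 := QE_le_one hα n
  have h2 : E α (n + 1) = E α n * t α n := rfl
  have h3 := t_nonneg (α := α) n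
  calc (Q α (n + 1) : ℝ) * E α (n + 1) = ((Q α (n + 1) : ℝ) * E α n) * t α n := by
        rw [h2]; ring
    _ ≤ 1 * t α n := mul_le_mul_of_nonneg_right h1 h3
    _ = t α n := one_mul _

lemma sumQ (hα : Irrational α) : ∀ n, ∑ k ∈ Finset.range (n + 1), Q α k ≤ 4 * Q α n := by
  intro n
  induction n using Nat.twoStepInduction with
  | zero => simp [Q]
  | one =>
      have : ∑ k ∈ Finset.range 2, Q α k = 1 := by
        simp [Finset.sum_range_succ, Q]
      rw [this]; show 1 ≤ 4 * Q α 1; simp [Q]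
  | more n ih1 _ =>
      have h1 : ∑ k ∈ Finset.range (n + 3), Q α k
          = (∑ k ∈ Finset.range (n + 1), Q α k) + Q α (n + 1) + Q α (n + 2) := by
        rw [Finset.sum_range_succ, Finset.sum_range_succ]
      have e1 : Q α (n + 1 + 1) = Q α (n + 2) := rfl
      have e2 : (∑ k ∈ Finset.range (n + 2 + 1), Q α k) = ∑ k ∈ Finset.range (n + 3), Q α k := rfl
      have h2 : 2 * Q α n ≤ Q α (n + 2) := by
        have hA := A_pos hα n
        have hm := Q_mono hα n
        show 2 * Q α n ≤ A α n * Q α (n + 1) + Q α n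
        have : Q α n ≤ A α n * Q α (n + 1) := by
          calc Q α n ≤ Q α (n + 1) := hm
            _ = 1 * Q α (n + 1) := (one_mul _).symm
            _ ≤ A α n * Q α (n + 1) := Nat.mul_le_mul_right _ hA
        omega
      have h3 := Q_mono hα (n + 1)
      omega

lemma tele (hα : Irrational α) : ∀ n,
    (∑ k ∈ Finset.range n, A α k * Q α (k + 1)) + 1 = Q α (n + 1) + Q α n
  | 0 => by simp [Q]
  | n + 1 => by
      have ih := tele hα n
      rw [Finset.sum_range_succ]
      have hQ : Q α (n + 1 + 1) = A α n * Q α (n + 1) + Q α n := rfl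
      have e1 : Q α (n + 1 + 1) = Q α (n + 2) := rfl
      omega

/-! ### Greedy Ostrowski-type expansion of a point `x` -/

/-- Greedy residual sequence for `x`. -/
noncomputable def dd (α x : ℝ) : ℕ → ℝ
  | 0 => Int.fract x
  | n + 1 => (⌈dd α x n / E α (n + 1)⌉₊ : ℝ) * E α (n + 1) - dd α x n

/-- Greedy digits. -/
noncomputable def Bd (α x : ℝ) (n : ℕ) : ℕ := ⌈dd α x n / E α (n + 1)⌉₊

/-- Partial Ostrowski sums (the integers approximating from one side). -/
noncomputable def QQ (α x : ℝ) (n : ℕ) : ℕ :=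
  ∑ k ∈ Finset.range n, Bd α x k * Q α (k + 1)

variable {x : ℝ}

lemma dd_succ (n : ℕ) : dd α x (n + 1) = (Bd α x n : ℝ) * E α (n + 1) - dd α x n := rfl

lemma dd_mem (hα : Irrational α) : ∀ n, 0 ≤ dd α x n ∧ dd α x n < E α n
  | 0 => ⟨Int.fract_nonneg x, Int.fract_lt_one x⟩
  | n + 1 => by
      obtain ⟨h0, h1⟩ := dd_mem hα n
      have hE : 0 < E α (n + 1) := E_pos hα (n + 1)
      have hc : 0 ≤ dd α x n / E α (n + 1) := div_nonneg h0 hE.le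
      constructor
      · have := Nat.le_ceil (dd α x n / E α (n + 1))
        rw [dd_succ, sub_nonneg]
        calc dd α x n = dd α x n / E α (n + 1) * E α (n + 1) := by
              field_simp
          _ ≤ (⌈dd α x n / E α (n + 1)⌉₊ : ℝ) * E α (n + 1) :=
              mul_le_mul_of_nonneg_right this hE.le
      · have := Nat.ceil_lt_add_one hc
        rw [dd_succ, sub_lt_iff_lt_add]
        calc (Bd α x n : ℝ) * E α (n + 1) < (dd α x n / E α (n + 1) + 1) * E α (n + 1) :=
              mul_lt_mul_of_pos_right this hE
          _ = E α (n + 1) + dd α x n := by field_simp; ring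

lemma Bd_le (hα : Irrational α) (n : ℕ) : Bd α x n ≤ A α n + 1 := by
  rw [Bd, Nat.ceil_le]
  have hE : 0 < E α (n + 1) := E_pos hα (n + 1)
  have ht := t_pos hα n
  have h1 : dd α x n < E α n := (dd_mem (x := x) hα n).2
  have h2 : E α n = (t α n)⁻¹ * E α (n + 1) := by
    rw [E_succ]; field_simp
  have h3 : dd α x n / E α (n + 1) < (t α n)⁻¹ := by
    rw [div_lt_iff₀ hE]
    calc dd α x n < E α n := h1
      _ = (t α n)⁻¹ * E α (n + 1) := h2
  have h4 := key hα n
  have h5 : t α (n + 1) < 1 := t_lt_one (n + 1)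
  push_cast
  linarith

lemma QQ_int (hα : Irrational α) : ∀ n, ∃ k : ℤ,
    (QQ α x n : ℝ) * α - x = (k : ℝ) + (-1 : ℝ) ^ (n + 1) * dd α x n
  | 0 => by
      refine ⟨-⌊x⌋, ?_⟩
      have h1 : QQ α x 0 = 0 := rfl
      have h2 : dd α x 0 = x - ((⌊x⌋ : ℤ) : ℝ) := rfl
      rw [h1, h2]
      push_cast
      ring
  | n + 1 => by
      obtain ⟨k, hk⟩ := QQ_int hα n
      refine ⟨k + (Bd α x n : ℤ) * P α (n + 1), ?_⟩
      have hQQ : QQ α x (n + 1) = QQ α x n + Bd α x n * Q α (n + 1) :=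
        Finset.sum_range_succ _ n
      have hPQ := PQ hα n
      have hdd := dd_succ (α := α) (x := x) n
      have hcast : ((QQ α x (n + 1) : ℕ) : ℝ)
          = (QQ α x n : ℝ) + (Bd α x n : ℝ) * (Q α (n + 1) : ℝ) := by
        rw [hQQ]; push_cast; ring
      rw [hcast]
      have expand : ((QQ α x n : ℝ) + (Bd α x n : ℝ) * (Q α (n + 1) : ℝ)) * α - x
          = ((QQ α x n : ℝ) * α - x)
            + (Bd α x n : ℝ) * ((Q α (n + 1) : ℝ) * α - (P α (n + 1) : ℝ))
            + (Bd α x n : ℝ) * (P α (n + 1) : ℝ) := by ring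
      rw [expand, hk, hPQ, hdd]
      push_cast
      rcases Nat.even_or_odd n with he | ho
      · have h1 : (-1 : ℝ) ^ n = 1 := he.neg_one_pow
        have h2 : (-1 : ℝ) ^ (n + 1) = -1 := by rw [pow_succ, h1]; ring
        have h3 : (-1 : ℝ) ^ (n + 2) = 1 := by rw [pow_succ, h2]; ring
        rw [h1, h2, h3]; ring
      · have h1 : (-1 : ℝ) ^ n = -1 := ho.neg_one_pow
        have h2 : (-1 : ℝ) ^ (n + 1) = 1 := by rw [pow_succ, h1]; ring
        have h3 : (-1 : ℝ) ^ (n + 2) = -1 := by rw [pow_succ, h2]; ring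
        rw [h1, h2, h3]; ring

lemma QQ_le (hα : Irrational α) (n : ℕ) : QQ α x n ≤ Q α (n + 1) + 5 * Q α n := by
  have h1 : QQ α x n ≤ ∑ k ∈ Finset.range n, (A α k + 1) * Q α (k + 1) := by
    apply Finset.sum_le_sum
    intro k _
    exact Nat.mul_le_mul_right _ (Bd_le hα k)
  have h2 : ∑ k ∈ Finset.range n, (A α k + 1) * Q α (k + 1)
      = (∑ k ∈ Finset.range n, A α k * Q α (k + 1)) + ∑ k ∈ Finset.range n, Q α (k + 1) := by
    rw [← Finset.sum_add_distrib]
    apply Finset.sum_congr rfl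
    intro k _
    ring
  have h3 := tele hα n
  have h4 : ∑ k ∈ Finset.range n, Q α (k + 1) ≤ ∑ k ∈ Finset.range (n + 1), Q α k := by
    rw [Finset.sum_range_succ' (fun k => Q α k) n]
    simp [Q]
  have h5 := sumQ hα n
  omega

lemma QQ_ge (hB : ∀ k, 1 ≤ Bd α x k) (hα : Irrational α) : ∀ n, Q α n ≤ QQ α x n
  | 0 => by simp [Q]
  | n + 1 => by
      have hQQ : QQ α x (n + 1) = QQ α x n + Bd α x n * Q α (n + 1) :=
        Finset.sum_range_succ _ n
      have h1 : Q α (n + 1) ≤ Bd α x n * Q α (n + 1) := by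
        calc Q α (n + 1) = 1 * Q α (n + 1) := (one_mul _).symm
          _ ≤ _ := Nat.mul_le_mul_right _ (hB n)
      omega


lemma nint_le (y : ℝ) (k : ℤ) : nint y ≤ |y - (k : ℝ)| := by
  rcases eq_or_ne (round y) k with h | h
  · rw [nint, h]
  · have h1 : |y - (round y : ℝ)| ≤ 1 / 2 := abs_sub_round y
    have h2 : (1 : ℝ) ≤ |((round y : ℤ) : ℝ) - (k : ℝ)| := by
      have hne : round y - k ≠ 0 := sub_ne_zero.mpr h
      have := Int.one_le_abs hne
      calc (1 : ℝ) = ((1 : ℤ) : ℝ) := by norm_num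
        _ ≤ ((|round y - k| : ℤ) : ℝ) := by exact_mod_cast this
        _ = |((round y : ℤ) : ℝ) - (k : ℝ)| := by push_cast; ring_nf
    have h3 : |((round y : ℤ) : ℝ) - (k : ℝ)| ≤ |((round y : ℤ) : ℝ) - y| + |y - (k : ℝ)| :=
      abs_sub_le _ _ _
    have h4 : |((round y : ℤ) : ℝ) - y| = |y - (round y : ℝ)| := abs_sub_comm _ _
    rw [nint]
    linarith

lemma nint_pm (y e : ℝ) (k : ℤ) (m : ℕ) (h : y = (k : ℝ) + (-1 : ℝ) ^ m * e)
    (he : 0 ≤ e) : nint y ≤ e := by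
  have h1 := nint_le y k
  have h2 : |y - (k : ℝ)| = e := by
    rw [h]
    have : (k : ℝ) + (-1 : ℝ) ^ m * e - (k : ℝ) = (-1 : ℝ) ^ m * e := by ring
    rw [this, abs_mul, abs_pow, abs_neg, abs_one, one_pow, one_mul, abs_of_nonneg he]
  linarith

lemma stream_zero' : GenContFract.IntFractPair.stream α 0 = some ⟨⌊α⌋, t α 0⟩ := rfl

lemma stream_succ_eq (hα : Irrational α) : ∀ n,
    GenContFract.IntFractPair.stream α (n + 1) = some ⟨⌊(t α n)⁻¹⌋, t α (n + 1)⟩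
  | 0 => by
      have h := GenContFract.IntFractPair.stream_succ_of_some (stream_zero' (α := α))
        (by exact (t_irr hα 0).ne_zero)
      rw [h]
      rfl
  | n + 1 => by
      have h := GenContFract.IntFractPair.stream_succ_of_some (stream_succ_eq hα n)
        (by exact (t_irr hα (n + 1)).ne_zero)
      rw [h]
      rfl

lemma partQ (hα : Irrational α) (n : ℕ) : partialQuotient α n = (A α n : ℝ) := by
  have h1 := GenContFract.get?_of_eq_some_of_succ_get?_intFractPair_stream
    (stream_succ_eq hα n)
  have h2 := GenContFract.partDen_eq_s_b h1
  rw [partialQuotient, h2]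
  show ((⌊(t α n)⁻¹⌋ : ℤ) : ℝ) = (A α n : ℝ)
  have h0 : (0 : ℝ) ≤ (t α n)⁻¹ := inv_nonneg.mpr (t_nonneg n)
  rw [A]
  exact_mod_cast (congrArg (Int.cast : ℤ → ℝ) (Int.natCast_floor_eq_floor h0)).symm


lemma quadbound {L δ : ℝ} (hδ : 0 < δ) (hδ1 : δ ≤ 1) (hL1 : L ≤ 1) :
    (L + δ / 2) * (1 - L + δ / 2) < 1 / 4 + 2 * δ := by
  nlinarith [sq_nonneg (L - 1 / 2)]

set_option maxHeartbeats 2000000 in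
lemma core (hα : Irrational α)
    (hsm : ∀ δ' : ℝ, 0 < δ' → ∀ᶠ n in atTop, t α n ≤ δ')
    (x c δ : ℝ) (hδ : 0 < δ) (hδ1 : δ ≤ 1) (hcd : c = 1 / 4 + 3 * δ) (N₀ : ℕ)
    (hf : ∀ q : ℕ, N₀ ≤ q → c < (q : ℝ) * nint ((q : ℝ) * α - x)) : False := by
  have hc4 : 1 / 4 < c := by rw [hcd]; linarith
  by_cases hall : ∀ n, dd α x n ≠ 0
  · -- main case : all residuals positive
    have hdpos : ∀ n, 0 < dd α x n := fun n =>
      lt_of_le_of_ne (dd_mem (x := x) hα n).1 (Ne.symm (hall n))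
    have hB : ∀ n, 1 ≤ Bd α x n := by
      intro n
      rw [Bd]
      exact Nat.ceil_pos.mpr (div_pos (hdpos n) (E_pos hα (n + 1)))
    set G : ℕ → ℝ := fun n => dd α x n / E α n with hGdef
    have hG0 : ∀ n, 0 < G n := fun n => div_pos (hdpos n) (E_pos hα n)
    have hG1 : ∀ n, G n < 1 := fun n => (div_lt_one (E_pos hα n)).mpr (dd_mem (x := x) hα n).2
    have hdG : ∀ n, dd α x n = G n * E α n := by
      intro n
      have := (E_pos hα n).ne'
      exact (div_mul_cancel₀ _ this).symm
    -- Bound 1 : the candidate QQ (n+1)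
    have hb1 : ∀ n : ℕ, ((QQ α x (n + 1) : ℕ) : ℝ) *
        nint (((QQ α x (n + 1) : ℕ) : ℝ) * α - x) ≤ G (n + 1) + 5 * t α n := by
      intro n
      obtain ⟨k, hk⟩ := QQ_int hα (x := x) (n + 1)
      have hd0 : 0 ≤ dd α x (n + 1) := (dd_mem (x := x) hα (n + 1)).1
      have hk' : ((QQ α x (n + 1) : ℕ) : ℝ) * α - x
          = (k : ℝ) + (-1 : ℝ) ^ (n + 2) * dd α x (n + 1) := hk
      have hnint : nint (((QQ α x (n + 1) : ℕ) : ℝ) * α - x) ≤ dd α x (n + 1) :=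
        nint_pm _ _ k (n + 2) hk' hd0
      have hQQle : QQ α x (n + 1) ≤ Q α (n + 2) + 5 * Q α (n + 1) := QQ_le hα (n + 1)
      have hcast : ((QQ α x (n + 1) : ℕ) : ℝ) ≤ (Q α (n + 2) : ℝ) + 5 * (Q α (n + 1) : ℝ) := by
        exact_mod_cast hQQle
      have hA1 : (Q α (n + 2) : ℝ) * E α (n + 1) ≤ 1 := QE_le_one hα (n + 1)
      have hA3 : (Q α (n + 1) : ℝ) * E α (n + 1) ≤ t α n := rho_le hα n
      have hG0' : (0 : ℝ) ≤ G (n + 1) := (hG0 (n + 1)).le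
      have hG1' : G (n + 1) ≤ 1 := (hG1 (n + 1)).le
      have hQn : (0 : ℝ) ≤ (Q α (n + 1) : ℝ) := Nat.cast_nonneg _
      have hQn2 : (0 : ℝ) ≤ (Q α (n + 2) : ℝ) := Nat.cast_nonneg _
      have hEn : (0 : ℝ) < E α (n + 1) := E_pos hα (n + 1)
      calc ((QQ α x (n + 1) : ℕ) : ℝ) * nint (((QQ α x (n + 1) : ℕ) : ℝ) * α - x)
          ≤ ((QQ α x (n + 1) : ℕ) : ℝ) * dd α x (n + 1) :=
            mul_le_mul_of_nonneg_left hnint (Nat.cast_nonneg _)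
        _ ≤ ((Q α (n + 2) : ℝ) + 5 * (Q α (n + 1) : ℝ)) * dd α x (n + 1) :=
            mul_le_mul_of_nonneg_right hcast hd0
        _ = ((Q α (n + 2) : ℝ) * E α (n + 1)) * G (n + 1)
            + 5 * (((Q α (n + 1) : ℝ)) * E α (n + 1)) * G (n + 1) := by
            rw [hdG (n + 1)]; ring
        _ ≤ 1 * G (n + 1) + 5 * t α n * 1 := by
            have t1 : ((Q α (n + 2) : ℝ) * E α (n + 1)) * G (n + 1) ≤ 1 * G (n + 1) :=
              mul_le_mul_of_nonneg_right hA1 hG0'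
            have t2 : ((Q α (n + 1) : ℝ) * E α (n + 1)) * G (n + 1) ≤ t α n * 1 :=
              mul_le_mul hA3 hG1' hG0' (t_nonneg n)
            linarith
        _ = G (n + 1) + 5 * t α n := by ring
    -- Bound 2 : the overshoot candidate
    have hb2 : ∀ n : ℕ, ∃ q3 : ℕ, QQ α x (n + 1) ≤ q3 ∧
        (q3 : ℝ) * nint ((q3 : ℝ) * α - x)
          ≤ G (n + 1) * (1 - G (n + 2)) + t α (n + 1) + 5 * t α n := by
      intro n
      obtain ⟨k, hk⟩ := QQ_int hα (x := x) (n + 1)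
      have hk' : ((QQ α x (n + 1) : ℕ) : ℝ) * α - x
          = (k : ℝ) + (-1 : ℝ) ^ (n + 2) * dd α x (n + 1) := hk
      have hPQ2 : (Q α (n + 2) : ℝ) * α - ((P α (n + 2) : ℤ) : ℝ)
          = (-1 : ℝ) ^ (n + 1) * E α (n + 2) := PQ hα (n + 1)
      have hB1 : 1 ≤ Bd α x (n + 1) := hB (n + 1)
      refine ⟨QQ α x (n + 1) + (Bd α x (n + 1) - 1) * Q α (n + 2), Nat.le_add_right _ _, ?_⟩
      set q3 : ℕ := QQ α x (n + 1) + (Bd α x (n + 1) - 1) * Q α (n + 2) with hq3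
      have hq3cast : (q3 : ℝ)
          = ((QQ α x (n + 1) : ℕ) : ℝ) + ((Bd α x (n + 1) : ℝ) - 1) * (Q α (n + 2) : ℝ) := by
        rw [hq3]
        push_cast [hB1]
        ring
      have hd2 : dd α x (n + 2) = (Bd α x (n + 1) : ℝ) * E α (n + 2) - dd α x (n + 1) :=
        dd_succ (n + 1)
      have herr0 : 0 ≤ E α (n + 2) - dd α x (n + 2) := by
        linarith [(dd_mem (x := x) hα (n + 2)).2]
      have hid : (q3 : ℝ) * α - x = ((k + ((Bd α x (n + 1) : ℤ) - 1) * P α (n + 2) : ℤ) : ℝ)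
          + (-1 : ℝ) ^ (n + 2) * (E α (n + 2) - dd α x (n + 2)) := by
        rw [hq3cast]
        push_cast
        rw [hd2]
        rcases Nat.even_or_odd n with he | ho
        · have h1 : (-1 : ℝ) ^ (n + 1) = -1 := by rw [pow_succ, he.neg_one_pow]; ring
          have h2 : (-1 : ℝ) ^ (n + 2) = 1 := by rw [pow_succ, h1]; ring
          rw [h2] at hk' ⊢
          rw [h1] at hPQ2
          linear_combination hk' + ((Bd α x (n + 1) : ℝ) - 1) * hPQ2
        · have h1 : (-1 : ℝ) ^ (n + 1) = 1 := by rw [pow_succ, ho.neg_one_pow]; ring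
          have h2 : (-1 : ℝ) ^ (n + 2) = -1 := by rw [pow_succ, h1]; ring
          rw [h2] at hk' ⊢
          rw [h1] at hPQ2
          linear_combination hk' + ((Bd α x (n + 1) : ℝ) - 1) * hPQ2
      have hnint3 : nint ((q3 : ℝ) * α - x) ≤ E α (n + 2) - dd α x (n + 2) :=
        nint_pm _ _ _ (n + 2) hid herr0
      have hQQle : QQ α x (n + 1) ≤ Q α (n + 2) + 5 * Q α (n + 1) := QQ_le hα (n + 1)
      have hQQcast : ((QQ α x (n + 1) : ℕ) : ℝ) ≤ (Q α (n + 2) : ℝ) + 5 * (Q α (n + 1) : ℝ) := by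
        exact_mod_cast hQQle
      have hq3le : (q3 : ℝ) ≤ (Bd α x (n + 1) : ℝ) * (Q α (n + 2) : ℝ)
          + 5 * (Q α (n + 1) : ℝ) := by
        rw [hq3cast]
        have hBd1R : (1 : ℝ) ≤ (Bd α x (n + 1) : ℝ) := by exact_mod_cast hB1
        nlinarith [Nat.cast_nonneg (α := ℝ) (Q α (n + 2))]
      have hEn2 : (0 : ℝ) < E α (n + 2) := E_pos hα (n + 2)
      have hBdE : (Bd α x (n + 1) : ℝ) * E α (n + 2) ≤ dd α x (n + 1) + E α (n + 2) := by
        have hc0 : (0 : ℝ) ≤ dd α x (n + 1) / E α (n + 2) :=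
          div_nonneg (dd_mem (x := x) hα (n + 1)).1 hEn2.le
        have hcl : ((⌈dd α x (n + 1) / E α (n + 2)⌉₊ : ℕ) : ℝ)
            < dd α x (n + 1) / E α (n + 2) + 1 := Nat.ceil_lt_add_one hc0
        have hBdd : (Bd α x (n + 1) : ℝ) = ((⌈dd α x (n + 1) / E α (n + 2)⌉₊ : ℕ) : ℝ) := rfl
        rw [hBdd]
        have := mul_lt_mul_of_pos_right hcl hEn2
        have heq : dd α x (n + 1) / E α (n + 2) * E α (n + 2) = dd α x (n + 1) := by
          field_simp
        nlinarith
      -- now assemble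
      have hA1 : (Q α (n + 2) : ℝ) * E α (n + 1) ≤ 1 := QE_le_one hα (n + 1)
      have hA2 : (Q α (n + 2) : ℝ) * E α (n + 2) ≤ t α (n + 1) := rho_le hα (n + 1)
      have hA3 : (Q α (n + 1) : ℝ) * E α (n + 1) ≤ t α n := rho_le hα n
      have hE21 : E α (n + 2) ≤ E α (n + 1) := (E_lt hα (n + 1)).le
      have hu0 : 0 ≤ 1 - G (n + 2) := by linarith [hG1 (n + 2)]
      have hu1 : 1 - G (n + 2) ≤ 1 := by linarith [hG0 (n + 2)]
      have hQn : (0 : ℝ) ≤ (Q α (n + 1) : ℝ) := Nat.cast_nonneg _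
      have hQn2 : (0 : ℝ) ≤ (Q α (n + 2) : ℝ) := Nat.cast_nonneg _
      have hG0' : (0 : ℝ) ≤ G (n + 1) := (hG0 (n + 1)).le
      have hstep1 : (q3 : ℝ) * nint ((q3 : ℝ) * α - x)
          ≤ ((Bd α x (n + 1) : ℝ) * (Q α (n + 2) : ℝ) + 5 * (Q α (n + 1) : ℝ))
            * (E α (n + 2) - dd α x (n + 2)) := by
        calc (q3 : ℝ) * nint ((q3 : ℝ) * α - x)
            ≤ (q3 : ℝ) * (E α (n + 2) - dd α x (n + 2)) :=
              mul_le_mul_of_nonneg_left hnint3 (Nat.cast_nonneg _)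
          _ ≤ _ := mul_le_mul_of_nonneg_right hq3le herr0
      have hsub : E α (n + 2) - dd α x (n + 2) = (1 - G (n + 2)) * E α (n + 2) := by
        rw [hdG (n + 2)]; ring
      have hterm2 : 5 * (Q α (n + 1) : ℝ) * (E α (n + 2) - dd α x (n + 2)) ≤ 5 * t α n := by
        have h1 : E α (n + 2) - dd α x (n + 2) ≤ E α (n + 1) := by
          linarith [(dd_mem (x := x) hα (n + 2)).1]
        have h2 : (Q α (n + 1) : ℝ) * (E α (n + 2) - dd α x (n + 2))
            ≤ (Q α (n + 1) : ℝ) * E α (n + 1) := mul_le_mul_of_nonneg_left h1 hQn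
        linarith
      have hterm1 : (Bd α x (n + 1) : ℝ) * (Q α (n + 2) : ℝ)
          * (E α (n + 2) - dd α x (n + 2))
          ≤ G (n + 1) * (1 - G (n + 2)) + t α (n + 1) := by
        have h4 : (Bd α x (n + 1) : ℝ) * E α (n + 2) * (Q α (n + 2) : ℝ)
            ≤ dd α x (n + 1) * (Q α (n + 2) : ℝ) + t α (n + 1) := by
          have hexp := mul_le_mul_of_nonneg_right hBdE hQn2
          have hA2' : (Q α (n + 2) : ℝ) * E α (n + 2) ≤ t α (n + 1) := hA2
          linarith [hexp, hA2']
        have h5 : dd α x (n + 1) * (Q α (n + 2) : ℝ) ≤ G (n + 1) := by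
          rw [hdG (n + 1)]
          calc G (n + 1) * E α (n + 1) * (Q α (n + 2) : ℝ)
              = G (n + 1) * ((Q α (n + 2) : ℝ) * E α (n + 1)) := by ring
            _ ≤ G (n + 1) * 1 := mul_le_mul_of_nonneg_left hA1 hG0'
            _ = G (n + 1) := mul_one _
        have h6 : (Bd α x (n + 1) : ℝ) * E α (n + 2) * (Q α (n + 2) : ℝ)
            ≤ G (n + 1) + t α (n + 1) := by linarith
        have h7 : (Bd α x (n + 1) : ℝ) * (Q α (n + 2) : ℝ)
            * (E α (n + 2) - dd α x (n + 2))
            = ((Bd α x (n + 1) : ℝ) * E α (n + 2) * (Q α (n + 2) : ℝ)) * (1 - G (n + 2)) := by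
          rw [hsub]; ring
        rw [h7]
        have h8 : ((Bd α x (n + 1) : ℝ) * E α (n + 2) * (Q α (n + 2) : ℝ)) * (1 - G (n + 2))
            ≤ (G (n + 1) + t α (n + 1)) * (1 - G (n + 2)) :=
          mul_le_mul_of_nonneg_right h6 hu0
        have ht1 : 0 ≤ t α (n + 1) := t_nonneg (n + 1)
        have h9 : t α (n + 1) * (1 - G (n + 2)) ≤ t α (n + 1) * 1 :=
          mul_le_mul_of_nonneg_left hu1 ht1
        linarith [h8, h9]
      calc (q3 : ℝ) * nint ((q3 : ℝ) * α - x)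
          ≤ ((Bd α x (n + 1) : ℝ) * (Q α (n + 2) : ℝ) + 5 * (Q α (n + 1) : ℝ))
            * (E α (n + 2) - dd α x (n + 2)) := hstep1
        _ = (Bd α x (n + 1) : ℝ) * (Q α (n + 2) : ℝ) * (E α (n + 2) - dd α x (n + 2))
            + 5 * (Q α (n + 1) : ℝ) * (E α (n + 2) - dd α x (n + 2)) := by ring
        _ ≤ (G (n + 1) * (1 - G (n + 2)) + t α (n + 1)) + 5 * t α n := by
            linarith
        _ = G (n + 1) * (1 - G (n + 2)) + t α (n + 1) + 5 * t α n := by ring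
    -- choose thresholds
    obtain ⟨N₂, hN₂⟩ := eventually_atTop.mp (hsm (δ / 6) (by positivity))
    set N₁ : ℕ := max (N₂ + 1) (2 * N₀ + 1) with hN₁
    have hQQN : ∀ m : ℕ, N₁ ≤ m → N₀ ≤ QQ α x m := by
      intro m hm
      obtain ⟨n, rfl⟩ : ∃ n, m = n + 1 := ⟨m - 1, by omega⟩
      have h1 : n ≤ 2 * Q α (n + 1) := n_le_two_Q hα n
      have h2 : 2 * N₀ ≤ n := by omega
      have h3 : N₀ ≤ Q α (n + 1) := by omega
      have h4 : Q α (n + 1) ≤ QQ α x (n + 1) := QQ_ge hB hα (n + 1)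
      omega
    have claim1 : ∀ m : ℕ, N₁ ≤ m → 1 / 4 + 2 * δ < G m := by
      intro m hm
      obtain ⟨n, rfl⟩ : ∃ n, m = n + 1 := ⟨m - 1, by omega⟩
      have htn : t α n ≤ δ / 6 := hN₂ n (by omega)
      have hf1 := hf (QQ α x (n + 1)) (hQQN (n + 1) hm)
      have hb := hb1 n
      rw [hcd] at hf1
      linarith
    have claim2 : ∀ m : ℕ, N₁ ≤ m → 1 / 4 + 2 * δ < G m * (1 - G (m + 1)) := by
      intro m hm
      obtain ⟨n, rfl⟩ : ∃ n, m = n + 1 := ⟨m - 1, by omega⟩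
      have htn : t α n ≤ δ / 6 := hN₂ n (by omega)
      have htn1 : t α (n + 1) ≤ δ / 6 := hN₂ (n + 1) (by omega)
      obtain ⟨q3, hq3ge, hq3bd⟩ := hb2 n
      have hq3N : N₀ ≤ q3 := le_trans (hQQN (n + 1) hm) hq3ge
      have hf1 := hf q3 hq3N
      rw [hcd] at hf1
      linarith
    -- limsup argument
    have hGbdd_le : IsBoundedUnder (· ≤ ·) atTop G :=
      isBoundedUnder_of ⟨1, fun n => (hG1 n).le⟩
    have hGbdd_ge : IsBoundedUnder (· ≥ ·) atTop G :=
      isBoundedUnder_of ⟨0, fun n => (hG0 n).le⟩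
    set L := limsup G atTop with hLdef
    have hL1 : L ≤ 1 :=
      Filter.limsup_le_of_le hGbdd_ge.isCoboundedUnder_le
        (Eventually.of_forall fun n => (hG1 n).le)
    have hL2 : 1 / 4 + 2 * δ ≤ L :=
      Filter.le_limsup_of_frequently_le
        (((eventually_ge_atTop N₁).mono fun m hm => (claim1 m hm).le).frequently) hGbdd_le
    have hev2 : ∀ᶠ m in atTop, G m < L + δ / 2 :=
      eventually_lt_of_limsup_lt (by linarith) hGbdd_le
    obtain ⟨N₃, hN₃⟩ := eventually_atTop.mp hev2
    have hfr : ∃ᶠ m in atTop, L - δ / 2 < G m :=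
      frequently_lt_of_lt_limsup hGbdd_ge.isCoboundedUnder_le (by linarith)
    obtain ⟨m, hGm, hm⟩ :=
      (hfr.and_eventually (eventually_ge_atTop (max (N₁ + 1) (N₃ + 1)))).exists
    obtain ⟨n, rfl⟩ : ∃ n, m = n + 1 := ⟨m - 1, by omega⟩
    have h2 := claim2 n (by omega)
    have h3 : G n < L + δ / 2 := hN₃ n (by omega)
    have h4 : L - δ / 2 < G (n + 1) := hGm
    have hcontr : G n * (1 - G (n + 1)) ≤ (L + δ / 2) * (1 - L + δ / 2) := by
      apply mul_le_mul h3.le (by linarith) (by linarith [hG1 (n + 1)]) (by linarith)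
    have h9 := quadbound hδ hδ1 hL1
    exact absurd ((h2.trans_le hcontr).trans h9) (lt_irrefl _)
  · -- degenerate case : some residual vanishes, x is in the orbit
    push_neg at hall
    obtain ⟨n₀, hd0⟩ := hall
    obtain ⟨k, hk⟩ := QQ_int hα (x := x) n₀
    rw [hd0] at hk
    have hk' : ((QQ α x n₀ : ℕ) : ℝ) * α - x = (k : ℝ) := by
      rw [hk]; ring
    obtain ⟨N₂, hN₂⟩ := eventually_atTop.mp (hsm (1 / 8) (by norm_num))
    set m : ℕ := max (max (2 * N₀) N₂) (16 * (QQ α x n₀ + 1)) with hm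
    set q : ℕ := QQ α x n₀ + Q α (m + 1) with hq
    have hqN : N₀ ≤ q := by
      have h1 : m ≤ 2 * Q α (m + 1) := n_le_two_Q hα m
      have h2 : 2 * N₀ ≤ m := le_trans (le_max_left _ _) (le_max_left _ _)
      have h3 : N₀ ≤ Q α (m + 1) := by omega
      omega
    have hPQm : (Q α (m + 1) : ℝ) * α - ((P α (m + 1) : ℤ) : ℝ)
        = (-1 : ℝ) ^ m * E α (m + 1) := PQ hα m
    have hid : (q : ℝ) * α - x = ((k + P α (m + 1) : ℤ) : ℝ)
        + (-1 : ℝ) ^ m * E α (m + 1) := by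
      have hqcast : (q : ℝ) = ((QQ α x n₀ : ℕ) : ℝ) + (Q α (m + 1) : ℝ) := by
        rw [hq]; push_cast; ring
      rw [hqcast]
      push_cast
      linear_combination hk' + hPQm
    have hE0 : 0 ≤ E α (m + 1) := E_nonneg (m + 1)
    have hnint : nint ((q : ℝ) * α - x) ≤ E α (m + 1) := nint_pm _ _ _ m hid hE0
    have hEm : (m + 1 : ℝ) * E α (m + 1) ≤ 2 := by
      have h1 : (Q α (m + 2) : ℝ) * E α (m + 1) ≤ 1 := QE_le_one hα (m + 1)
      have h2 : m + 1 ≤ 2 * Q α (m + 2) := n_le_two_Q hα (m + 1)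
      have h2' : ((m : ℝ) + 1) ≤ 2 * (Q α (m + 2) : ℝ) := by exact_mod_cast h2
      nlinarith
    have hmB : 16 * ((QQ α x n₀ : ℝ) + 1) ≤ (m : ℝ) + 1 := by
      have : 16 * (QQ α x n₀ + 1) ≤ m := le_max_right _ _
      have := this
      push_cast
      exact_mod_cast Nat.le_succ_of_le this
    have hQQE : ((QQ α x n₀ : ℕ) : ℝ) * E α (m + 1) ≤ 1 / 8 := by
      have hm1 : (0 : ℝ) < (m : ℝ) + 1 := by positivity
      have h16 : (0 : ℝ) < 16 * ((QQ α x n₀ : ℝ) + 1) := by positivity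
      have hE2 : E α (m + 1) ≤ 2 / ((m : ℝ) + 1) := by
        rw [le_div_iff₀ hm1]
        nlinarith
      calc ((QQ α x n₀ : ℕ) : ℝ) * E α (m + 1)
          ≤ ((QQ α x n₀ : ℕ) : ℝ) * (2 / ((m : ℝ) + 1)) :=
            mul_le_mul_of_nonneg_left hE2 (Nat.cast_nonneg _)
        _ ≤ 1 / 8 := by
            have h0 : (0 : ℝ) ≤ (QQ α x n₀ : ℝ) := Nat.cast_nonneg _
            rw [mul_comm, div_mul_eq_mul_div, div_le_iff₀ hm1]
            linarith
    have hrho : (Q α (m + 1) : ℝ) * E α (m + 1) ≤ t α m := rho_le hα m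
    have htm : t α m ≤ 1 / 8 := hN₂ m (le_trans (le_max_right _ _) (le_max_left _ _))
    have hf1 := hf q hqN
    have hbound : (q : ℝ) * nint ((q : ℝ) * α - x) ≤ 1 / 4 := by
      have hqcast : (q : ℝ) = ((QQ α x n₀ : ℕ) : ℝ) + (Q α (m + 1) : ℝ) := by
        rw [hq]; push_cast; ring
      have hn0 : 0 ≤ nint ((q : ℝ) * α - x) := abs_nonneg _
      calc (q : ℝ) * nint ((q : ℝ) * α - x) ≤ (q : ℝ) * E α (m + 1) := by
            apply mul_le_mul_of_nonneg_left hnint (Nat.cast_nonneg _)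
        _ = ((QQ α x n₀ : ℕ) : ℝ) * E α (m + 1) + (Q α (m + 1) : ℝ) * E α (m + 1) := by
            rw [hqcast]; ring
        _ ≤ 1 / 8 + 1 / 8 := by linarith
        _ = 1 / 4 := by norm_num
    linarith

end CFAux

theorem stmt3 (α : ℝ) (hα : Irrational α)
    (ha : PartialQuotientsTendToInfinity α) :
    ∀ ε : ℝ, 1 / 4 < ε → badSetPlus α ε = ∅ := by
  intro ε hε
  rw [Set.eq_empty_iff_forall_notMem]
  intro x hx
  obtain ⟨hxI, hxl⟩ := hx
  set ε' := min ε (3 / 8) with hε'def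
  have hε'1 : 1 / 4 < ε' := lt_min hε (by norm_num)
  have hε'2 : ε' ≤ ε := min_le_left _ _
  have hε'3 : ε' ≤ 3 / 8 := min_le_right _ _
  set δ := (ε' - 1 / 4) / 4 with hδdef
  have hδ : 0 < δ := by rw [hδdef]; linarith
  have hδ1 : δ ≤ 1 := by rw [hδdef]; linarith
  set c := 1 / 4 + 3 * δ with hcdef
  have hcε : c < ε' := by rw [hcdef, hδdef]; linarith
  have hbdd : IsBoundedUnder (· ≥ ·) atTop (fun q : ℕ => (q : ℝ) * nint ((q : ℝ) * α - x)) :=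
    isBoundedUnder_of ⟨0, fun q => mul_nonneg (Nat.cast_nonneg q) (abs_nonneg _)⟩
  have hev : ∀ᶠ q : ℕ in atTop, c < (q : ℝ) * nint ((q : ℝ) * α - x) :=
    eventually_lt_of_lt_liminf (lt_of_lt_of_le (lt_of_lt_of_le hcε hε'2) hxl) hbdd
  obtain ⟨N₀, hN₀⟩ := eventually_atTop.mp hev
  have hAten : Tendsto (fun n : ℕ => (CFAux.A α n : ℝ)) atTop atTop := by
    have h1 : ∀ k : ℕ, partialQuotient α k = (CFAux.A α k : ℝ) :=
      fun k => CFAux.partQ hα k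
    exact Tendsto.congr h1 ha
  have hsm : ∀ δ' : ℝ, 0 < δ' → ∀ᶠ n in atTop, CFAux.t α n ≤ δ' := by
    intro δ' hδ'
    have h1 : ∀ᶠ n in atTop, (1 / δ' : ℝ) ≤ (CFAux.A α n : ℝ) :=
      hAten.eventually_ge_atTop _
    filter_upwards [h1] with n hn
    have hd0 : (0 : ℝ) < 1 / δ' := by positivity
    have hA0 : (0 : ℝ) < (CFAux.A α n : ℝ) := lt_of_lt_of_le hd0 hn
    have h2 : CFAux.t α n ≤ ((CFAux.A α n : ℝ))⁻¹ := CFAux.t_le_invA hα n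
    have h3 : ((CFAux.A α n : ℝ))⁻¹ ≤ ((1 : ℝ) / δ')⁻¹ := by
      apply inv_anti₀ hd0 hn
    have h4 : ((1 : ℝ) / δ')⁻¹ = δ' := by
      field_simp
    linarith
  exact CFAux.core hα hsm x c δ hδ hδ1 hcdef N₀ (fun q hq => hN₀ q hq)
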